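/- Let s be a state on the McNaughton functions of [0,1]^n. Then s is faithful if and only if there exists a unique strictly positive regular Borel probability measure μ on [0,1]^n such that s(f) = ∫_{[0,1]^n} f dμ for every McNaughton function f. -/

import Mathlib

open Set MeasureTheory

/-- The unit cube `[0,1]^n` in `ℝ^n`. -/
def cube (n : ℕ) : Set (Fin n → ℝ) := Set.Icc 0 1

/-- `f` is a McNaughton function on `[0,1]^n`: continuous on the cube, `[0,1]`-valued there,
and piecewise affine with integer coefficients. -/
def IsMcNaughton (n : ℕ) (f : (Fin n → ℝ) → ℝ) : Prop :=
  ContinuousOn f (cube n) ∧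
  (∀ x ∈ cube n, f x ∈ Set.Icc (0 : ℝ) 1) ∧
  ∃ (m : ℕ) (a : Fin m → Fin n → ℤ) (b : Fin m → ℤ),
    ∀ x ∈ cube n, ∃ j : Fin m, f x = (b j : ℝ) + ∑ i, (a j i : ℝ) * x i

/-- A state on the McNaughton functions of `[0,1]^n`: normalized and additive on
sums of McNaughton functions that stay below `1`. -/
def IsState (n : ℕ) (s : ((Fin n → ℝ) → ℝ) → ℝ) : Prop :=
  (∀ f, IsMcNaughton n f → s f ∈ Set.Icc (0 : ℝ) 1) ∧
  s (fun _ => 1) = 1 ∧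
  ∀ f g, IsMcNaughton n f → IsMcNaughton n g → (∀ x ∈ cube n, f x + g x ≤ 1) →
    s (fun x => f x + g x) = s f + s g

/-- A state is faithful if it is nonzero on every McNaughton function
that is not identically `0` on the cube. -/
def Faithful (n : ℕ) (s : ((Fin n → ℝ) → ℝ) → ℝ) : Prop :=
  ∀ f, IsMcNaughton n f → (∃ x ∈ cube n, f x ≠ 0) → s f ≠ 0


namespace KP

variable {n : ℕ}

/-- clamp to `[0,1]` -/
def clamp (y : ℝ) : ℝ := max (min y 1) 0

lemma clamp_mem (y : ℝ) : clamp y ∈ Set.Icc (0:ℝ) 1 := by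
  constructor
  · exact le_max_right _ _
  · rcases le_total y 1 with h | h <;> simp [clamp, min_def, max_def, h] <;> split <;> linarith

lemma clamp_nonneg (y : ℝ) : 0 ≤ clamp y := (clamp_mem y).1
lemma clamp_le_one (y : ℝ) : clamp y ≤ 1 := (clamp_mem y).2

lemma clamp_of_le (y : ℝ) (h : y ≤ 0) : clamp y = 0 := by
  simp [clamp, max_def, min_def]
  split <;> intro <;> linarith

lemma clamp_of_ge (y : ℝ) (h : 1 ≤ y) : clamp y = 1 := by
  simp [clamp, min_def, max_def]
  split <;> split <;> linarith

lemma clamp_of_mem (y : ℝ) (h0 : 0 ≤ y) (h1 : y ≤ 1) : clamp y = y := by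
  simp [clamp, min_def, max_def]
  split <;> split <;> linarith

lemma clamp_eq (y : ℝ) : clamp y = min (max y 0) 1 := by
  rcases le_total y 0 with h | h
  · rw [clamp_of_le y h]; simp [max_def, min_def]; split <;> split <;> linarith
  · rcases le_total y 1 with h1 | h1
    · rw [clamp_of_mem y h h1]
      rw [max_eq_left h, min_eq_left h1]
    · rw [clamp_of_ge y h1]; simp [max_def, min_def]; split <;> intro <;> linarith

lemma continuous_clamp : Continuous clamp :=
  ((continuous_id.min continuous_const).max continuous_const)

/-- piecewise affine with integer coefficients (on the cube) -/
def PWA (n : ℕ) (f : (Fin n → ℝ) → ℝ) : Prop :=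
  ∃ (m : ℕ) (a : Fin m → Fin n → ℤ) (b : Fin m → ℤ),
    ∀ x ∈ cube n, ∃ j : Fin m, f x = (b j : ℝ) + ∑ i, (a j i : ℝ) * x i

variable {n : ℕ}

lemma pwa_affine (a : Fin n → ℤ) (b : ℤ) :
    PWA n (fun x => (b : ℝ) + ∑ i, (a i : ℝ) * x i) := by
  exact ⟨1, fun _ => a, fun _ => b, fun x _ => ⟨0, rfl⟩⟩

lemma pwa_const (b : ℤ) : PWA n (fun _ => (b : ℝ)) := by
  refine ⟨1, fun _ _ => 0, fun _ => b, fun x _ => ⟨0, ?_⟩⟩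
  simp

lemma pwa_add {f g : (Fin n → ℝ) → ℝ} (hf : PWA n f) (hg : PWA n g) :
    PWA n (fun x => f x + g x) := by
  obtain ⟨m, a, b, h⟩ := hf
  obtain ⟨m', a', b', h'⟩ := hg
  rcases Nat.eq_zero_or_pos m with rfl | hm
  · -- then cube is empty of witnesses? no: h x gives j : Fin 0 for x ∈ cube, contradiction unless cube empty
    refine ⟨0, finZeroElim, finZeroElim, fun x hx => ?_⟩
    exact absurd (h x hx) (by rintro ⟨j, -⟩; exact j.elim0)
  rcases Nat.eq_zero_or_pos m' with rfl | hm'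
  · refine ⟨0, finZeroElim, finZeroElim, fun x hx => ?_⟩
    exact absurd (h' x hx) (by rintro ⟨j, -⟩; exact j.elim0)
  refine ⟨m * m', fun j i => a (finProdFinEquiv.symm j).1 i + a' (finProdFinEquiv.symm j).2 i,
    fun j => b (finProdFinEquiv.symm j).1 + b' (finProdFinEquiv.symm j).2, fun x hx => ?_⟩
  obtain ⟨j, hj⟩ := h x hx
  obtain ⟨k, hk⟩ := h' x hx
  refine ⟨finProdFinEquiv (j, k), ?_⟩
  simp only [Equiv.symm_apply_apply]
  push_cast
  rw [hj, hk]
  rw [Finset.sum_congr rfl (fun i _ => add_mul ((a j i : ℝ)) ((a' k i : ℝ)) (x i)),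
    Finset.sum_add_distrib]
  ring

lemma pwa_neg {f : (Fin n → ℝ) → ℝ} (hf : PWA n f) : PWA n (fun x => - f x) := by
  obtain ⟨m, a, b, h⟩ := hf
  refine ⟨m, fun j i => - a j i, fun j => - b j, fun x hx => ?_⟩
  obtain ⟨j, hj⟩ := h x hx
  refine ⟨j, ?_⟩
  push_cast
  rw [hj]
  rw [Finset.sum_congr rfl (fun i _ => (neg_mul (a j i : ℝ) (x i)))]
  rw [Finset.sum_neg_distrib]
  ring

lemma pwa_sub {f g : (Fin n → ℝ) → ℝ} (hf : PWA n f) (hg : PWA n g) :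
    PWA n (fun x => f x - g x) := by
  have := pwa_add hf (pwa_neg hg)
  simpa [sub_eq_add_neg] using this

lemma pwa_min {f g : (Fin n → ℝ) → ℝ} (hf : PWA n f) (hg : PWA n g) :
    PWA n (fun x => min (f x) (g x)) := by
  obtain ⟨m, a, b, h⟩ := hf
  obtain ⟨m', a', b', h'⟩ := hg
  refine ⟨m + m', Fin.addCases a a', Fin.addCases b b', fun x hx => ?_⟩
  rcases min_cases (f x) (g x) with ⟨he, -⟩ | ⟨he, -⟩
  · obtain ⟨j, hj⟩ := h x hx
    exact ⟨Fin.castAdd m' j, by simpa using he.trans hj⟩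
  · obtain ⟨k, hk⟩ := h' x hx
    exact ⟨Fin.natAdd m k, by simpa using he.trans hk⟩

lemma pwa_max {f g : (Fin n → ℝ) → ℝ} (hf : PWA n f) (hg : PWA n g) :
    PWA n (fun x => max (f x) (g x)) := by
  obtain ⟨m, a, b, h⟩ := hf
  obtain ⟨m', a', b', h'⟩ := hg
  refine ⟨m + m', Fin.addCases a a', Fin.addCases b b', fun x hx => ?_⟩
  rcases max_cases (f x) (g x) with ⟨he, -⟩ | ⟨he, -⟩
  · obtain ⟨j, hj⟩ := h x hx
    exact ⟨Fin.castAdd m' j, by simpa using he.trans hj⟩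
  · obtain ⟨k, hk⟩ := h' x hx
    exact ⟨Fin.natAdd m k, by simpa using he.trans hk⟩

lemma pwa_nsmul {f : (Fin n → ℝ) → ℝ} (hf : PWA n f) (m : ℕ) :
    PWA n (fun x => (m : ℝ) * f x) := by
  induction m with
  | zero => simpa using pwa_const 0
  | succ k ih =>
      have := pwa_add ih hf
      push_cast
      convert this using 2 with x
      ring

lemma pwa_clamp_sub_nat {f : (Fin n → ℝ) → ℝ} (hf : PWA n f) (j : ℕ) :
    PWA n (fun x => clamp (f x - j)) := by
  have h1 : PWA n (fun x => f x - (j : ℝ)) := by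
    have := pwa_sub hf (pwa_const (j : ℤ))
    simpa using this
  have h2 : PWA n (fun x => min (f x - (j:ℝ)) ((1:ℤ):ℝ)) := pwa_min h1 (pwa_const 1)
  have h3 := pwa_max h2 (pwa_const 0)
  simpa [clamp] using h3

lemma mc_def {f : (Fin n → ℝ) → ℝ} (hc : ContinuousOn f (cube n))
    (hb : ∀ x ∈ cube n, f x ∈ Set.Icc (0:ℝ) 1) (hp : PWA n f) : IsMcNaughton n f :=
  ⟨hc, hb, hp⟩

lemma mc_pwa {f : (Fin n → ℝ) → ℝ} (hf : IsMcNaughton n f) : PWA n f := hf.2.2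
lemma mc_cont {f : (Fin n → ℝ) → ℝ} (hf : IsMcNaughton n f) : ContinuousOn f (cube n) := hf.1
lemma mc_bdd {f : (Fin n → ℝ) → ℝ} (hf : IsMcNaughton n f) :
    ∀ x ∈ cube n, f x ∈ Set.Icc (0:ℝ) 1 := hf.2.1

lemma mc_zero : IsMcNaughton n (fun _ => (0:ℝ)) :=
  mc_def continuousOn_const (fun _ _ => by norm_num) (by simpa using pwa_const 0)

lemma mc_one : IsMcNaughton n (fun _ => (1:ℝ)) :=
  mc_def continuousOn_const (fun _ _ => by norm_num) (by simpa using pwa_const 1)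

section s
variable {s : ((Fin n → ℝ) → ℝ) → ℝ} (hs : IsState n s)
include hs

lemma s_mem {f} (hf : IsMcNaughton n f) : s f ∈ Set.Icc (0:ℝ) 1 := hs.1 f hf
lemma s_nonneg {f} (hf : IsMcNaughton n f) : 0 ≤ s f := (hs.1 f hf).1
lemma s_one : s (fun _ => 1) = 1 := hs.2.1
lemma s_add {f g} (hf : IsMcNaughton n f) (hg : IsMcNaughton n g)
    (h : ∀ x ∈ cube n, f x + g x ≤ 1) : s (fun x => f x + g x) = s f + s g :=
  hs.2.2 f g hf hg h

lemma s_zero : s (fun _ => 0) = 0 := by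
  have h := s_add hs (mc_zero) (mc_zero) (fun x _ => by norm_num)
  have : (fun _ : Fin n → ℝ => (0:ℝ) + 0) = (fun _ => (0:ℝ)) := by funext x; ring
  rw [this] at h
  linarith

/-- the difference of two McNaughton functions that agree on the cube is McNaughton -/
lemma mc_diff {f g} (hf : IsMcNaughton n f) (hg : IsMcNaughton n g)
    (h : ∀ x ∈ cube n, f x = g x) : IsMcNaughton n (fun x => g x - f x) := by
  refine mc_def ((mc_cont hg).sub (mc_cont hf)) (fun x hx => by rw [h x hx]; simp)
    (pwa_sub (mc_pwa hg) (mc_pwa hf))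

lemma s_congr {f g} (hf : IsMcNaughton n f) (hg : IsMcNaughton n g)
    (h : ∀ x ∈ cube n, f x = g x) : s f = s g := by
  have hd : IsMcNaughton n (fun x => g x - f x) := mc_diff hs hf hg h
  have hd' : IsMcNaughton n (fun x => f x - g x) :=
    mc_diff hs hg hf (fun x hx => (h x hx).symm)
  have e1 := s_add hs hf hd (fun x hx => by rw [h x hx]; have := (mc_bdd hg x hx).2; linarith)
  have e2 := s_add hs hg hd' (fun x hx => by rw [h x hx]; have := (mc_bdd hg x hx).2; linarith)
  have r1 : (fun x => f x + (g x - f x)) = g := by funext x; ring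
  have r2 : (fun x => g x + (f x - g x)) = f := by funext x; ring
  rw [r1] at e1; rw [r2] at e2
  have p1 := s_nonneg hs hd
  have p2 := s_nonneg hs hd'
  linarith

lemma s_mono {f g} (hf : IsMcNaughton n f) (hg : IsMcNaughton n g)
    (h : ∀ x ∈ cube n, f x ≤ g x) : s f ≤ s g := by
  have hd : IsMcNaughton n (fun x => g x - f x) := by
    refine mc_def ((mc_cont hg).sub (mc_cont hf)) (fun x hx => ?_)
      (pwa_sub (mc_pwa hg) (mc_pwa hf))
    have h1 := (mc_bdd hf x hx).1
    have h2 := (mc_bdd hg x hx).2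
    exact ⟨by linarith [h x hx], by linarith⟩
  have e1 := s_add hs hf hd (fun x hx => by have := (mc_bdd hg x hx).2; linarith)
  have r1 : (fun x => f x + (g x - f x)) = g := by funext x; ring
  rw [r1] at e1
  have := s_nonneg hs hd
  linarith

end s

section s3
variable {s : ((Fin n → ℝ) → ℝ) → ℝ} (hs : IsState n s)

/-- extended McNaughton functions, with values in `[0, K]` -/
def EMc (n K : ℕ) (g : (Fin n → ℝ) → ℝ) : Prop :=
  ContinuousOn g (cube n) ∧ (∀ x ∈ cube n, g x ∈ Set.Icc (0:ℝ) (K:ℝ)) ∧ PWA n g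

def layer (g : (Fin n → ℝ) → ℝ) (j : ℕ) : (Fin n → ℝ) → ℝ := fun x => clamp (g x - j)

/-- the extension of the state to extended McNaughton functions -/
def sig (s : ((Fin n → ℝ) → ℝ) → ℝ) (K : ℕ) (g : (Fin n → ℝ) → ℝ) : ℝ :=
  ∑ j ∈ Finset.range K, s (layer g j)

omit hs

lemma emc_of_mc {f} (hf : IsMcNaughton n f) : EMc n 1 f :=
  ⟨mc_cont hf, fun x hx => by simpa using mc_bdd hf x hx, mc_pwa hf⟩

lemma mc_of_emc1 {f} (hf : EMc n 1 f) : IsMcNaughton n f :=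
  mc_def hf.1 (fun x hx => by simpa using hf.2.1 x hx) hf.2.2

lemma mc_layer {g} {K : ℕ} (hg : EMc n K g) (j : ℕ) : IsMcNaughton n (layer g j) := by
  refine mc_def ?_ (fun x _ => clamp_mem _) (pwa_clamp_sub_nat hg.2.2 j)
  exact continuous_clamp.comp_continuousOn (hg.1.sub continuousOn_const)

lemma emc_min {g} {K : ℕ} (hg : EMc n K g) (c : ℕ) :
    EMc n c (fun x => min (g x) (c:ℝ)) := by
  refine ⟨hg.1.inf continuousOn_const, fun x hx => ?_, ?_⟩
  · have := hg.2.1 x hx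
    exact ⟨le_min this.1 (by positivity), min_le_right _ _⟩
  · have := pwa_min hg.2.2 (pwa_const (c : ℤ))
    simpa using this

lemma emc_add_mc {g b} {K : ℕ} (hg : EMc n K g) (hb : IsMcNaughton n b) :
    EMc n (K + 1) (fun x => g x + b x) := by
  refine ⟨hg.1.add (mc_cont hb), fun x hx => ?_, pwa_add hg.2.2 (mc_pwa hb)⟩
  have h1 := hg.2.1 x hx
  have h2 := mc_bdd hb x hx
  have hc : ((K + 1 : ℕ) : ℝ) = (K : ℝ) + 1 := by push_cast; ring
  have h3 : (0:ℝ) ≤ g x + b x := by linarith [h1.1, h2.1]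
  have h4 : g x + b x ≤ ((K + 1 : ℕ) : ℝ) := by rw [hc]; linarith [h1.2, h2.2]
  exact ⟨h3, h4⟩

lemma emc_smul {f} (hf : IsMcNaughton n f) (m : ℕ) :
    EMc n m (fun x => (m:ℝ) * f x) := by
  refine ⟨continuousOn_const.mul (mc_cont hf), fun x hx => ?_, pwa_nsmul (mc_pwa hf) m⟩
  have h := mc_bdd hf x hx
  have h1 : (m:ℝ) * f x ≤ (m:ℝ) * 1 := mul_le_mul_of_nonneg_left h.2 (Nat.cast_nonneg m)
  constructor
  · exact mul_nonneg (Nat.cast_nonneg m) h.1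
  · simpa using h1

/-- truncated sum of two McNaughton functions -/
lemma mc_oplus {a b} (ha : IsMcNaughton n a) (hb : IsMcNaughton n b) :
    IsMcNaughton n (fun x => min (a x + b x) 1) := by
  refine mc_def (((mc_cont ha).add (mc_cont hb)).inf continuousOn_const) (fun x hx => ?_) ?_
  · have h1 := mc_bdd ha x hx; have h2 := mc_bdd hb x hx
    exact ⟨le_min (by linarith [h1.1, h2.1]) one_pos.le, min_le_right _ _⟩
  · have := pwa_min (pwa_add (mc_pwa ha) (mc_pwa hb)) (pwa_const 1)
    simpa using this

lemma mc_odot {a b} (ha : IsMcNaughton n a) (hb : IsMcNaughton n b) :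
    IsMcNaughton n (fun x => max (a x + b x - 1) 0) := by
  refine mc_def ((((mc_cont ha).add (mc_cont hb)).sub continuousOn_const).sup
    continuousOn_const) (fun x hx => ?_) ?_
  · have h1 := mc_bdd ha x hx; have h2 := mc_bdd hb x hx
    exact ⟨le_max_right _ _, max_le (by linarith [h1.2, h2.2]) one_pos.le⟩
  · have := pwa_max (pwa_sub (pwa_add (mc_pwa ha) (mc_pwa hb)) (pwa_const 1)) (pwa_const 0)
    simpa using this

include hs

/-- the fundamental identity for states: `s a + s b = s (a ⊕ b) + s (a ⊙ b)` -/
lemma two_term {a b} (ha : IsMcNaughton n a) (hb : IsMcNaughton n b) :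
    s a + s b = s (fun x => min (a x + b x) 1) + s (fun x => max (a x + b x - 1) 0) := by
  set c : (Fin n → ℝ) → ℝ := fun x => max (a x + b x - 1) 0 with hc
  set b' : (Fin n → ℝ) → ℝ := fun x => b x - c x with hb'def
  have hcM : IsMcNaughton n c := mc_odot ha hb
  have hb'M : IsMcNaughton n b' := by
    refine mc_def ((mc_cont hb).sub (mc_cont hcM)) (fun x hx => ?_)
      (pwa_sub (mc_pwa hb) (mc_pwa hcM))
    have h1 := mc_bdd ha x hx; have h2 := mc_bdd hb x hx
    have hcv : c x ≤ b x := by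
      simp only [hc]
      apply max_le (by linarith [h1.2]) h2.1
    constructor
    · simp only [hb'def]; linarith
    · simp only [hb'def, hc]
      have : 0 ≤ c x := le_max_right _ _
      linarith [h2.2, this]
  have e1 : s (fun x => a x + b' x) = s a + s b' := by
    refine s_add hs ha hb'M (fun x hx => ?_)
    have h2 := mc_bdd hb x hx
    simp only [hb'def, hc]
    rcases le_total (a x + b x) 1 with h | h
    · rw [max_eq_right (by linarith)]; linarith
    · rw [max_eq_left (by linarith)]; linarith
  have e2 : s (fun x => b' x + c x) = s b' + s c := by
    refine s_add hs hb'M hcM (fun x hx => ?_)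
    have h2 := mc_bdd hb x hx
    simp only [hb'def]
    linarith [h2.2]
  have r1 : (fun x => a x + b' x) = (fun x => min (a x + b x) 1) := by
    funext x
    simp only [hb'def, hc]
    rcases le_total (a x + b x) 1 with h | h
    · rw [max_eq_right (by linarith), min_eq_left h]; ring
    · rw [max_eq_left (by linarith), min_eq_right h]; ring
  have r2 : (fun x => b' x + c x) = b := by
    funext x; simp only [hb'def]; ring
  rw [r1] at e1; rw [r2] at e2
  rw [e1, e2]; ring

omit hs

lemma clamp_min_sub (y : ℝ) (K j : ℕ) (hj : j < K) :
    clamp (min y (K:ℝ) - j) = clamp (y - j) := by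
  rcases le_total y (K:ℝ) with h | h
  · rw [min_eq_left h]
  · rw [min_eq_right h]
    have hjK : (j:ℝ) + 1 ≤ (K:ℝ) := by exact_mod_cast hj
    rw [clamp_of_ge _ (by linarith), clamp_of_ge _ (by linarith)]

lemma clamp_eq_max {z : ℝ} (h : z ≤ 1) : clamp z = max z 0 := by
  rcases le_total z 0 with h0 | h0
  · rw [clamp_of_le _ h0, max_eq_right h0]
  · rw [clamp_of_mem _ h0 h, max_eq_left h0]

include hs

lemma sig_congr {g g'} {K : ℕ} (hg : EMc n K g) (hg' : EMc n K g')
    (h : ∀ x ∈ cube n, g x = g' x) : sig s K g = sig s K g' := by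
  refine Finset.sum_congr rfl (fun j _ => ?_)
  exact s_congr hs (mc_layer hg j) (mc_layer hg' j) (fun x hx => by simp [layer, h x hx])

lemma sig_split {g} {K : ℕ} (hg : EMc n (K + 1) g) :
    sig s (K + 1) g = sig s K (fun x => min (g x) (K:ℝ)) + s (layer g K) := by
  rw [sig, Finset.sum_range_succ]
  congr 1
  refine Finset.sum_congr rfl (fun j hj => ?_)
  have hjK : j < K := Finset.mem_range.mp hj
  congr 1
  funext x
  simp only [layer]
  rw [clamp_min_sub (g x) K j hjK]


omit hs

lemma idA {y β : ℝ} {K : ℕ} (hy0 : 0 ≤ y) (hyK : y ≤ (K:ℝ) + 1) (hβ0 : 0 ≤ β) (hβ1 : β ≤ 1) :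
    min (min y (K:ℝ) + min (clamp (y - (K:ℝ)) + β) 1) (K:ℝ) = min (y + β) (K:ℝ) := by
  simp only [clamp_eq]
  rcases le_total y (K:ℝ) with h|h <;> rcases le_total (y - K + β) 1 with h2|h2 <;>
    simp [min_def, max_def] <;> split_ifs <;> linarith

lemma idB {y β : ℝ} {K : ℕ} (hy0 : 0 ≤ y) (hyK : y ≤ (K:ℝ) + 1) (hβ0 : 0 ≤ β) (hβ1 : β ≤ 1) :
    min (max (min y (K:ℝ) + min (clamp (y - (K:ℝ)) + β) 1 - (K:ℝ)) 0
      + max (clamp (y - (K:ℝ)) + β - 1) 0) 1 = clamp (y + β - (K:ℝ)) := by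
  rcases le_total y (K:ℝ) with h|h
  · have ht : clamp (y - (K:ℝ)) = 0 := clamp_of_le _ (by linarith)
    simp only [ht, zero_add]
    rw [min_eq_left hβ1, min_eq_left h, max_eq_right (show β - 1 ≤ (0:ℝ) by linarith),
      add_zero, clamp_eq]
  · have ht : clamp (y - (K:ℝ)) = y - K := clamp_of_mem _ (by linarith) (by linarith)
    simp only [ht]
    rw [min_eq_right h]
    rcases le_total (y - K + β) 1 with h2|h2
    · rw [min_eq_left h2]
      have e : (K:ℝ) + (y - K + β) - K = y - K + β := by ring
      rw [e, max_eq_left (by linarith), max_eq_right (by linarith), add_zero,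
        clamp_of_mem _ (by linarith) (by linarith), min_eq_left h2]
      ring
    · rw [min_eq_right h2]
      have e : (K:ℝ) + 1 - K = (1:ℝ) := by ring
      rw [e, max_eq_left (by norm_num : (0:ℝ) ≤ 1), max_eq_left (by linarith)]
      rw [clamp_of_ge _ (by linarith)]
      have e2 : (1:ℝ) + (y - K + β - 1) = y + β - K := by ring
      rw [e2, min_eq_right (by linarith)]

lemma idC {y β : ℝ} {K : ℕ} (hy0 : 0 ≤ y) (hyK : y ≤ (K:ℝ) + 1) (hβ0 : 0 ≤ β) (hβ1 : β ≤ 1) :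
    max (max (min y (K:ℝ) + min (clamp (y - (K:ℝ)) + β) 1 - (K:ℝ)) 0
      + max (clamp (y - (K:ℝ)) + β - 1) 0 - 1) 0 = max (y + β - ((K:ℝ) + 1)) 0 := by
  rcases le_total y (K:ℝ) with h|h
  · have ht : clamp (y - (K:ℝ)) = 0 := clamp_of_le _ (by linarith)
    simp only [ht, zero_add]
    rw [min_eq_left hβ1, min_eq_left h, max_eq_right (show β - 1 ≤ (0:ℝ) by linarith), add_zero]
    rcases le_total (y + β - K) 0 with h3|h3
    · rw [max_eq_right h3, max_eq_right (by linarith : y + β - ((K:ℝ)+1) ≤ 0)]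
      rw [max_eq_right (by linarith : (0:ℝ) - 1 ≤ 0)]
    · rw [max_eq_left h3]
      rcases le_total (y + β - K - 1) 0 with h4|h4
      · rw [max_eq_right h4, max_eq_right (by linarith : y + β - ((K:ℝ)+1) ≤ 0)]
      · rw [max_eq_left h4, max_eq_left (by linarith : 0 ≤ y + β - ((K:ℝ)+1))]
        ring
  · have ht : clamp (y - (K:ℝ)) = y - K := clamp_of_mem _ (by linarith) (by linarith)
    simp only [ht]
    rw [min_eq_right h]
    rcases le_total (y - K + β) 1 with h2|h2
    · rw [min_eq_left h2]
      have e : (K:ℝ) + (y - K + β) - K = y - K + β := by ring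
      rw [e, max_eq_left (show (0:ℝ) ≤ y - (K:ℝ) + β by linarith),
        max_eq_right (show y - (K:ℝ) + β - 1 ≤ (0:ℝ) by linarith), add_zero]
      rw [max_eq_right (show y - (K:ℝ) + β - 1 ≤ (0:ℝ) by linarith),
        max_eq_right (show y + β - ((K:ℝ)+1) ≤ (0:ℝ) by linarith)]
    · rw [min_eq_right h2]
      have e : (K:ℝ) + 1 - K = (1:ℝ) := by ring
      rw [e, max_eq_left (show (0:ℝ) ≤ (1:ℝ) by norm_num),
        max_eq_left (show (0:ℝ) ≤ y - (K:ℝ) + β - 1 by linarith)]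
      have e2 : (1:ℝ) + (y - (K:ℝ) + β - 1) - 1 = y + β - ((K:ℝ) + 1) := by ring
      rw [e2]

lemma id_minmin {y : ℝ} {K : ℕ} : min (min y ((K:ℝ) + 1)) (K:ℝ) = min y (K:ℝ) := by
  rcases le_total y (K:ℝ) with h|h <;> simp [min_def] <;> split_ifs <;> linarith

lemma mc_max_sub {G : (Fin n → ℝ) → ℝ} {c : ℝ} (hcont : ContinuousOn G (cube n))
    (hpwa : PWA n (fun x => G x - c)) (hbd : ∀ x ∈ cube n, 0 ≤ G x ∧ G x ≤ c + 1) :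
    IsMcNaughton n (fun x => max (G x - c) 0) := by
  refine mc_def ((hcont.sub continuousOn_const).sup continuousOn_const) (fun x hx => ?_)
    (pwa_max hpwa (by simpa using pwa_const (0:ℤ)))
  have h := hbd x hx
  exact ⟨le_max_right _ _, max_le (by linarith [h.1, h.2]) zero_le_one⟩

include hs

lemma sig_one {g} (hg : EMc n 1 g) : sig s 1 g = s g := by
  rw [sig, Finset.sum_range_one]
  refine s_congr hs (mc_layer hg 0) (mc_of_emc1 hg) (fun x hx => ?_)
  have h := hg.2.1 x hx
  simp only [layer, Nat.cast_zero, sub_zero]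
  exact clamp_of_mem _ h.1 (by simpa using h.2)

/-- main induction: truncated-sum additivity at level K -/
lemma sigP : ∀ K : ℕ, 1 ≤ K → ∀ g b, EMc n K g → IsMcNaughton n b →
    sig s K g + s b =
      sig s K (fun x => min (g x + b x) (K:ℝ)) + s (fun x => max (g x + b x - K) 0) := by
  refine Nat.le_induction ?_ ?_
  · intro g b hg hb
    simp only [Nat.cast_one]
    have hgM := mc_of_emc1 hg
    have hop := mc_oplus hgM hb
    have e1 := sig_one hs hg
    have e2 : sig s 1 (fun x => min (g x + b x) 1) = s (fun x => min (g x + b x) 1) :=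
      sig_one hs (emc_of_mc hop)
    rw [e1, e2]
    exact two_term hs hgM hb
  · intro K hK IH g b hg hb
    have hcast : ((K + 1 : ℕ) : ℝ) = (K:ℝ) + 1 := by push_cast; ring
    have hbd : ∀ x ∈ cube n, 0 ≤ g x ∧ g x ≤ (K:ℝ) + 1 := fun x hx => by
      have h := hg.2.1 x hx
      exact ⟨h.1, by rw [← hcast]; exact h.2⟩
    have hbb := mc_bdd hb
    -- named functions (as comments):
    -- T  = fun x => clamp (g x - ↑K)           (= layer g K)
    -- G1 = fun x => min (g x) ↑K
    -- B1 = fun x => min (clamp (g x - ↑K) + b x) 1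
    -- C1 = fun x => max (clamp (g x - ↑K) + b x - 1) 0
    have hTM : IsMcNaughton n (fun x => clamp (g x - (K:ℝ))) := mc_layer hg K
    have hG1 : EMc n K (fun x => min (g x) (K:ℝ)) := emc_min hg K
    have hB1M : IsMcNaughton n (fun x => min (clamp (g x - (K:ℝ)) + b x) 1) :=
      mc_oplus hTM hb
    have hC1M : IsMcNaughton n (fun x => max (clamp (g x - (K:ℝ)) + b x - 1) 0) :=
      mc_odot hTM hb
    have hGB : EMc n (K+1+1) (fun x => g x + b x) := emc_add_mc hg hb
    have hG1B1 : EMc n (K+1)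
        (fun x => min (g x) (K:ℝ) + min (clamp (g x - (K:ℝ)) + b x) 1) :=
      emc_add_mc hG1 hB1M
    have hR1M : IsMcNaughton n
        (fun x => max (min (g x) (K:ℝ) + min (clamp (g x - (K:ℝ)) + b x) 1 - (K:ℝ)) 0) := by
      refine mc_max_sub hG1B1.1 ?_ (fun x hx => ?_)
      · have := pwa_sub hG1B1.2.2 (pwa_const (K:ℤ))
        beta_reduce at this
        simpa using this
      · have h := hG1B1.2.1 x hx
        exact ⟨h.1, by rw [← hcast]; exact h.2⟩
    have hM1 : EMc n K
        (fun x => min (min (g x) (K:ℝ) + min (clamp (g x - (K:ℝ)) + b x) 1) (K:ℝ)) :=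
      emc_min hG1B1 K
    have hMin2 : EMc n K (fun x => min (g x + b x) (K:ℝ)) := emc_min hGB K
    have hlast : IsMcNaughton n (fun x => max (g x + b x - ((K:ℝ) + 1)) 0) := by
      refine mc_max_sub hGB.1 ?_ (fun x hx => ?_)
      · have := pwa_sub hGB.2.2 (pwa_const ((K:ℤ) + 1))
        beta_reduce at this
        have e : (((K:ℤ) + 1 : ℤ) : ℝ) = (K:ℝ) + 1 := by push_cast; ring
        rw [e] at this
        exact this
      · have h1 := (hbd x hx)
        have h2 := hbb x hx
        exact ⟨by linarith [h1.1, h2.1], by linarith [h1.2, h2.2]⟩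
    have hclampGB : IsMcNaughton n (fun x => clamp (g x + b x - (K:ℝ))) := mc_layer hGB K
    -- step 0 : split sig (K+1) g
    have e0 : sig s (K+1) g = sig s K (fun x => min (g x) (K:ℝ))
        + s (fun x => clamp (g x - (K:ℝ))) := by
      have := sig_split hs hg
      exact this
    -- step 1 : two_term on (T, b)
    have e1 : s (fun x => clamp (g x - (K:ℝ))) + s b
        = s (fun x => min (clamp (g x - (K:ℝ)) + b x) 1)
          + s (fun x => max (clamp (g x - (K:ℝ)) + b x - 1) 0) := two_term hs hTM hb
    -- step 2 : induction hypothesis on (G1, B1)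
    have e2 : sig s K (fun x => min (g x) (K:ℝ)) + s (fun x => min (clamp (g x - (K:ℝ)) + b x) 1)
        = sig s K (fun x => min (min (g x) (K:ℝ) + min (clamp (g x - (K:ℝ)) + b x) 1) (K:ℝ))
          + s (fun x => max (min (g x) (K:ℝ) + min (clamp (g x - (K:ℝ)) + b x) 1 - (K:ℝ)) 0) :=
      IH _ _ hG1 hB1M
    -- step 3 : identify sig of M1 with sig of min (g + b) K
    have e3 : sig s K (fun x => min (min (g x) (K:ℝ) + min (clamp (g x - (K:ℝ)) + b x) 1) (K:ℝ))
        = sig s K (fun x => min (g x + b x) (K:ℝ)) := by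
      refine sig_congr hs hM1 hMin2 (fun x hx => ?_)
      have h1 := hbd x hx
      have h2 := hbb x hx
      exact idA h1.1 h1.2 h2.1 h2.2
    -- step 4 : two_term on (R1, C1)
    have e4 : s (fun x => max (min (g x) (K:ℝ) + min (clamp (g x - (K:ℝ)) + b x) 1 - (K:ℝ)) 0)
          + s (fun x => max (clamp (g x - (K:ℝ)) + b x - 1) 0)
        = s (fun x => min (max (min (g x) (K:ℝ) + min (clamp (g x - (K:ℝ)) + b x) 1 - (K:ℝ)) 0
              + max (clamp (g x - (K:ℝ)) + b x - 1) 0) 1)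
          + s (fun x => max (max (min (g x) (K:ℝ) + min (clamp (g x - (K:ℝ)) + b x) 1 - (K:ℝ)) 0
              + max (clamp (g x - (K:ℝ)) + b x - 1) 0 - 1) 0) := two_term hs hR1M hC1M
    have e5a : s (fun x => min (max (min (g x) (K:ℝ) + min (clamp (g x - (K:ℝ)) + b x) 1 - (K:ℝ)) 0
              + max (clamp (g x - (K:ℝ)) + b x - 1) 0) 1)
        = s (fun x => clamp (g x + b x - (K:ℝ))) := by
      refine s_congr hs (mc_oplus hR1M hC1M) hclampGB (fun x hx => ?_)
      have h1 := hbd x hx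
      have h2 := hbb x hx
      exact idB h1.1 h1.2 h2.1 h2.2
    have e5b : s (fun x => max (max (min (g x) (K:ℝ) + min (clamp (g x - (K:ℝ)) + b x) 1 - (K:ℝ)) 0
              + max (clamp (g x - (K:ℝ)) + b x - 1) 0 - 1) 0)
        = s (fun x => max (g x + b x - ((K:ℝ) + 1)) 0) := by
      refine s_congr hs (mc_odot hR1M hC1M) hlast (fun x hx => ?_)
      have h1 := hbd x hx
      have h2 := hbb x hx
      exact idC h1.1 h1.2 h2.1 h2.2
    -- now rewrite the goal
    have hM' : EMc n (K+1) (fun x => min (g x + b x) ((K:ℝ) + 1)) := by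
      have := emc_min hGB (K+1)
      rwa [hcast] at this
    have esplit : sig s (K+1) (fun x => min (g x + b x) ((K:ℝ) + 1))
        = sig s K (fun x => min (min (g x + b x) ((K:ℝ) + 1)) (K:ℝ))
          + s (fun x => clamp (min (g x + b x) ((K:ℝ) + 1) - (K:ℝ))) := by
      have := sig_split hs hM'
      exact this
    have f1 : (fun x : Fin n → ℝ => min (min (g x + b x) ((K:ℝ) + 1)) (K:ℝ))
        = (fun x => min (g x + b x) (K:ℝ)) := funext fun x => id_minmin
    have f2 : (fun x : Fin n → ℝ => clamp (min (g x + b x) ((K:ℝ) + 1) - (K:ℝ)))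
        = (fun x => clamp (g x + b x - (K:ℝ))) := funext fun x => by
      have := clamp_min_sub (g x + b x) (K+1) K (lt_add_one K)
      rwa [hcast] at this
    rw [hcast, esplit, f1, f2, e0]
    linarith [e1, e2, e3, e4, e5a, e5b]

lemma sigQ {K : ℕ} (hK : 1 ≤ K) {g b} (hg : EMc n K g) (hb : IsMcNaughton n b) :
    sig s (K+1) (fun x => g x + b x) = sig s K g + s b := by
  have hGB : EMc n (K+1) (fun x => g x + b x) := emc_add_mc hg hb
  have e : sig s (K+1) (fun x => g x + b x)
      = sig s K (fun x => min (g x + b x) (K:ℝ)) + s (fun x => clamp (g x + b x - (K:ℝ))) := by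
    have := sig_split hs hGB
    exact this
  have h2 := sigP hs K hK g b hg hb
  have e2 : s (fun x => clamp (g x + b x - (K:ℝ))) = s (fun x => max (g x + b x - (K:ℝ)) 0) := by
    refine s_congr hs (mc_layer hGB K) ?_ (fun x hx => ?_)
    · refine mc_max_sub hGB.1 ?_ (fun x hx => ?_)
      · have := pwa_sub hGB.2.2 (pwa_const (K:ℤ))
        beta_reduce at this
        simpa using this
      · have h1 := hg.2.1 x hx; have h3 := mc_bdd hb x hx
        exact ⟨by linarith [h1.1, h3.1], by linarith [h1.2, h3.2]⟩
    · have h1 := hg.2.1 x hx; have h3 := mc_bdd hb x hx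
      exact clamp_eq_max (by linarith [h1.2, h3.2])
  linarith

lemma star {f} (hf : IsMcNaughton n f) : ∀ m : ℕ, 1 ≤ m →
    sig s m (fun x => (m:ℝ) * f x) = m * s f := by
  refine Nat.le_induction ?_ ?_
  · have h1 : sig s 1 (fun x => ((1:ℕ):ℝ) * f x) = s (fun x => ((1:ℕ):ℝ) * f x) :=
      sig_one hs (emc_smul hf 1)
    simp only [Nat.cast_one, one_mul] at h1 ⊢
    rw [h1]
  · intro m hm IH
    have hcast : ((m+1:ℕ):ℝ) = (m:ℝ)+1 := by push_cast; ring
    have efun : (fun x => ((m+1:ℕ):ℝ) * f x) = (fun x => (m:ℝ) * f x + f x) :=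
      funext fun x => by rw [hcast]; ring
    rw [efun]
    have eq : sig s (m+1) (fun x => (m:ℝ) * f x + f x) = sig s m (fun x => (m:ℝ) * f x) + s f :=
      sigQ hs hm (emc_smul hf m) hf
    rw [eq, IH, hcast]; ring

lemma star' {f} (hf : IsMcNaughton n f) {m : ℕ} (hm : 1 ≤ m) :
    (m:ℝ) * s f = ∑ j ∈ Finset.range m, s (fun x => clamp ((m:ℝ) * f x - (j:ℝ))) := by
  rw [← star hs hf m hm]
  rfl

lemma s_small {f} (hf : IsMcNaughton n f) {m : ℕ} (hm : 1 ≤ m)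
    (hsm : ∀ x ∈ cube n, f x ≤ 1 / m) : s f ≤ 1 / m := by
  have hm0 : (0:ℝ) < m := by exact_mod_cast hm
  have hst := star' hs hf hm
  have hterm : ∀ j ∈ Finset.range m, j ≠ 0 → s (fun x => clamp ((m:ℝ) * f x - (j:ℝ))) = 0 := by
    intro j _ hj
    have hz : s (fun x => clamp ((m:ℝ) * f x - (j:ℝ))) = s (fun _ => (0:ℝ)) := by
      refine s_congr hs (mc_layer (emc_smul hf m) j) mc_zero (fun x hx => ?_)
      have hj1 : (1:ℝ) ≤ (j:ℝ) := by exact_mod_cast Nat.one_le_iff_ne_zero.mpr hj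
      have hle : (m:ℝ) * f x ≤ 1 := by
        have := hsm x hx
        calc (m:ℝ) * f x ≤ (m:ℝ) * (1/m) := mul_le_mul_of_nonneg_left this (le_of_lt hm0)
          _ = 1 := by field_simp
      exact clamp_of_le _ (by linarith)
    rw [hz, s_zero hs]
  rw [Finset.sum_eq_single_of_mem 0 (Finset.mem_range.mpr hm) hterm] at hst
  have hb := s_mem hs (mc_layer (emc_smul hf m) 0)
  have : (m:ℝ) * s f ≤ 1 := by
    rw [hst]; exact hb.2
  rw [le_div_iff₀ hm0, mul_comm]
  exact this

lemma s_le_add_inv {f g} (hf : IsMcNaughton n f) (hg : IsMcNaughton n g) {m : ℕ} (hm : 1 ≤ m)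
    (h : ∀ x ∈ cube n, f x ≤ g x + 1/m) : s f ≤ s g + 1/m := by
  have hm0 : (0:ℝ) < m := by exact_mod_cast hm
  have hdM : IsMcNaughton n (fun x => max (f x - g x) 0) := by
    refine mc_def (((mc_cont hf).sub (mc_cont hg)).sup continuousOn_const) (fun x hx => ?_)
      (pwa_max (pwa_sub (mc_pwa hf) (mc_pwa hg)) (by simpa using pwa_const (0:ℤ)))
    have h1 := mc_bdd hf x hx; have h2 := mc_bdd hg x hx
    exact ⟨le_max_right _ _, max_le (by linarith [h1.2, h2.1]) zero_le_one⟩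
  have hd_small : s (fun x => max (f x - g x) 0) ≤ 1/m := by
    refine s_small hs hdM hm (fun x hx => ?_)
    exact max_le (by linarith [h x hx]) (by positivity)
  have h2 : s f ≤ s (fun x => min (g x + max (f x - g x) 0) 1) := by
    refine s_mono hs hf (mc_oplus hg hdM) (fun x hx => ?_)
    have h1 := mc_bdd hf x hx
    refine le_min ?_ h1.2
    have : f x - g x ≤ max (f x - g x) 0 := le_max_left _ _
    linarith
  have h3 := two_term hs hg hdM
  have h4 := s_nonneg hs (mc_odot hg hdM)
  linarith

omit hs in
lemma mc_clamp_layer {f} (hf : IsMcNaughton n f) (m j : ℕ) :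
    IsMcNaughton n (fun x => clamp ((m:ℝ) * f x - (j:ℝ))) :=
  mc_layer (emc_smul hf m) j


end s3


lemma mc_max2 {a b} (ha : IsMcNaughton n a) (hb : IsMcNaughton n b) :
    IsMcNaughton n (fun x => max (a x) (b x)) := by
  refine mc_def ((mc_cont ha).sup (mc_cont hb)) (fun x hx => ?_)
    (pwa_max (mc_pwa ha) (mc_pwa hb))
  have h1 := mc_bdd ha x hx; have h2 := mc_bdd hb x hx
  exact ⟨le_max_of_le_left h1.1, max_le h1.2 h2.2⟩

lemma mc_min2 {a b} (ha : IsMcNaughton n a) (hb : IsMcNaughton n b) :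
    IsMcNaughton n (fun x => min (a x) (b x)) := by
  refine mc_def ((mc_cont ha).inf (mc_cont hb)) (fun x hx => ?_)
    (pwa_min (mc_pwa ha) (mc_pwa hb))
  have h1 := mc_bdd ha x hx; have h2 := mc_bdd hb x hx
  exact ⟨le_min h1.1 h2.1, min_le_of_left_le h1.2⟩

def fmax : List ((Fin n → ℝ) → ℝ) → (Fin n → ℝ) → ℝ
  | [] => fun _ => 0
  | f :: l => fun x => max (f x) (fmax l x)

def fmin : List ((Fin n → ℝ) → ℝ) → (Fin n → ℝ) → ℝ
  | [] => fun _ => 1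
  | f :: l => fun x => min (f x) (fmin l x)

lemma mc_fmax (l : List ((Fin n → ℝ) → ℝ)) (h : ∀ f ∈ l, IsMcNaughton n f) :
    IsMcNaughton n (fmax l) := by
  induction l with
  | nil => exact mc_zero
  | cons f l ih =>
      have h1 : IsMcNaughton n f := h f (List.mem_cons_self)
      have h2 := ih (fun g hg => h g (List.mem_cons_of_mem _ hg))
      exact mc_max2 h1 h2

lemma mc_fmin (l : List ((Fin n → ℝ) → ℝ)) (h : ∀ f ∈ l, IsMcNaughton n f) :
    IsMcNaughton n (fmin l) := by
  induction l with
  | nil => exact mc_one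
  | cons f l ih =>
      have h1 : IsMcNaughton n f := h f (List.mem_cons_self)
      have h2 := ih (fun g hg => h g (List.mem_cons_of_mem _ hg))
      exact mc_min2 h1 h2

lemma fmax_nonneg (l : List ((Fin n → ℝ) → ℝ)) (x : Fin n → ℝ) : 0 ≤ fmax l x := by
  induction l with
  | nil => exact le_refl 0
  | cons f l ih => exact le_max_of_le_right ih

lemma fmax_le {l : List ((Fin n → ℝ) → ℝ)} {x : Fin n → ℝ} {c : ℝ}
    (h : ∀ f ∈ l, f x ≤ c) (hc : 0 ≤ c) : fmax l x ≤ c := by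
  induction l with
  | nil => exact hc
  | cons f l ih =>
      exact max_le (h f (List.mem_cons_self)) (ih (fun g hg => h g (List.mem_cons_of_mem _ hg)))

lemma le_fmax {l : List ((Fin n → ℝ) → ℝ)} {f} (hf : f ∈ l) (x : Fin n → ℝ) :
    f x ≤ fmax l x := by
  induction l with
  | nil => simp at hf
  | cons g l ih =>
      rcases List.mem_cons.mp hf with rfl | hf'
      · exact le_max_left _ _
      · exact le_max_of_le_right (ih hf')

lemma fmin_le_one (l : List ((Fin n → ℝ) → ℝ)) (x : Fin n → ℝ) : fmin l x ≤ 1 := by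
  induction l with
  | nil => exact le_refl 1
  | cons f l ih => exact min_le_of_right_le ih

lemma fmin_le {l : List ((Fin n → ℝ) → ℝ)} {f} (hf : f ∈ l) (x : Fin n → ℝ) :
    fmin l x ≤ f x := by
  induction l with
  | nil => simp at hf
  | cons g l ih =>
      rcases List.mem_cons.mp hf with rfl | hf'
      · exact min_le_left _ _
      · exact min_le_of_right_le (ih hf')

lemma le_fmin {l : List ((Fin n → ℝ) → ℝ)} {x : Fin n → ℝ} {c : ℝ}
    (h : ∀ f ∈ l, c ≤ f x) (hc : c ≤ 1) : c ≤ fmin l x := by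
  induction l with
  | nil => exact hc
  | cons f l ih =>
      exact le_min (h f (List.mem_cons_self)) (ih (fun g hg => h g (List.mem_cons_of_mem _ hg)))

lemma pwa_affine1 (i : Fin n) (c d : ℤ) : PWA n (fun x => (c:ℝ) * x i + (d:ℝ)) := by
  have h := pwa_affine (n := n) (fun i' => if i' = i then c else 0) d
  have e : (fun x : Fin n → ℝ => ((d:ℤ):ℝ) + ∑ i', (((if i' = i then c else 0 : ℤ)):ℝ) * x i')
      = fun x => (c:ℝ) * x i + (d:ℝ) := by
    funext x
    have e2 : ∀ i', (((if i' = i then c else 0 : ℤ)):ℝ) * x i'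
        = if i' = i then (c:ℝ) * x i' else 0 := by
      intro i'; split <;> simp
    rw [Finset.sum_congr rfl (fun i' _ => e2 i'),
      Finset.sum_ite_eq' Finset.univ i (fun i' => (c:ℝ) * x i')]
    simp [add_comm]
  rwa [e] at h

lemma pwa_clamp {f : (Fin n → ℝ) → ℝ} (hf : PWA n f) : PWA n (fun x => clamp (f x)) := by
  have h1 : PWA n (fun x => min (f x) (((1:ℤ)):ℝ)) := pwa_min hf (pwa_const 1)
  have h2 := pwa_max h1 (pwa_const 0)
  simpa [clamp] using h2

/-- one-dimensional clamped affine bump factor -/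
def hat (i : Fin n) (c d : ℤ) : (Fin n → ℝ) → ℝ := fun x => clamp ((c:ℝ) * x i + (d:ℝ))

lemma mc_hat (i : Fin n) (c d : ℤ) : IsMcNaughton n (hat i c d) := by
  refine mc_def ?_ (fun x _ => clamp_mem _) (pwa_clamp (pwa_affine1 i c d))
  exact continuous_clamp.comp_continuousOn
    ((continuousOn_const.mul ((continuous_apply i).continuousOn)).add continuousOn_const)

/-- characteristic bump of the grid cell with lower corner `k/m` -/
def chi (m : ℕ) (k : Fin n → ℕ) : (Fin n → ℝ) → ℝ :=
  fmin ((List.finRange n).map fun i => fun x =>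
    min (hat i (m : ℤ) (1 - (k i : ℤ)) x) (hat i (-(m : ℤ)) ((k i : ℤ) + 2) x))

lemma chi_mc (m : ℕ) (k : Fin n → ℕ) : IsMcNaughton n (chi m k) := by
  refine mc_fmin _ (fun f hf => ?_)
  obtain ⟨i, -, rfl⟩ := List.mem_map.mp hf
  exact mc_min2 (mc_hat i _ _) (mc_hat i _ _)

lemma chi_le_one (m : ℕ) (k : Fin n → ℕ) (x : Fin n → ℝ) : chi m k x ≤ 1 :=
  fmin_le_one _ x

lemma chi_eq_one {m : ℕ} {k : Fin n → ℕ} {x : Fin n → ℝ}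
    (h : ∀ i, (k i : ℝ) ≤ (m:ℝ) * x i ∧ (m:ℝ) * x i ≤ (k i : ℝ) + 1) : chi m k x = 1 := by
  refine le_antisymm (chi_le_one m k x) (le_fmin (fun f hf => ?_) le_rfl)
  obtain ⟨i, -, rfl⟩ := List.mem_map.mp hf
  have h1 := (h i).1
  have h2 := (h i).2
  have e1 : hat i (m : ℤ) (1 - (k i : ℤ)) x = 1 := by
    refine clamp_of_ge _ ?_
    push_cast
    linarith
  have e2 : hat i (-(m : ℤ)) ((k i : ℤ) + 2) x = 1 := by
    refine clamp_of_ge _ ?_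
    push_cast
    linarith
  beta_reduce
  rw [e1, e2]
  norm_num

lemma chi_pos_imp {m : ℕ} {k : Fin n → ℕ} {x : Fin n → ℝ} (h : 0 < chi m k x) (i : Fin n) :
    (k i : ℝ) - 1 ≤ (m:ℝ) * x i ∧ (m:ℝ) * x i ≤ (k i : ℝ) + 2 := by
  have hmem : (fun x => min (hat i (m : ℤ) (1 - (k i : ℤ)) x) (hat i (-(m : ℤ)) ((k i : ℤ) + 2) x))
      ∈ (List.finRange n).map fun i => fun x =>
        min (hat i (m : ℤ) (1 - (k i : ℤ)) x) (hat i (-(m : ℤ)) ((k i : ℤ) + 2) x) :=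
    List.mem_map.mpr ⟨i, List.mem_finRange i, rfl⟩
  have hle := fmin_le hmem x
  have hp : 0 < min (hat i (m : ℤ) (1 - (k i : ℤ)) x) (hat i (-(m : ℤ)) ((k i : ℤ) + 2) x) :=
    lt_of_lt_of_le h hle
  have hp1 : 0 < hat i (m : ℤ) (1 - (k i : ℤ)) x := lt_of_lt_of_le hp (min_le_left _ _)
  have hp2 : 0 < hat i (-(m : ℤ)) ((k i : ℤ) + 2) x := lt_of_lt_of_le hp (min_le_right _ _)
  constructor
  · by_contra hcon
    push_neg at hcon
    have : hat i (m : ℤ) (1 - (k i : ℤ)) x = 0 := by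
      refine clamp_of_le _ ?_
      push_cast
      linarith
    rw [this] at hp1; exact lt_irrefl _ hp1
  · by_contra hcon
    push_neg at hcon
    have : hat i (-(m : ℤ)) ((k i : ℤ) + 2) x = 0 := by
      refine clamp_of_le _ ?_
      push_cast
      linarith
    rw [this] at hp2; exact lt_irrefl _ hp2

/-- McNaughton Urysohn lemma for disjoint compact subsets of the cube. -/
lemma urysohn {K1 K2 : Set (Fin n → ℝ)} (h1 : IsCompact K1) (h2 : IsCompact K2)
    (hK1 : K1 ⊆ cube n) (hK2 : K2 ⊆ cube n) (hd : Disjoint K1 K2) :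
    ∃ h, IsMcNaughton n h ∧ (∀ x ∈ K1, h x = 1) ∧ (∀ x ∈ K2, h x = 0) := by
  classical
  obtain ⟨δ, hδ, hthick⟩ := h1.exists_thickening_subset_open h2.isClosed.isOpen_compl
    (fun x hx => Set.disjoint_left.mp hd hx)
  obtain ⟨m, hmgt⟩ := exists_nat_gt (3/δ)
  have hm1 : 1 ≤ m := by
    refine Nat.one_le_iff_ne_zero.mpr ?_
    rintro rfl
    have hpos : (0:ℝ) < 3/δ := by positivity
    rw [Nat.cast_zero] at hmgt
    linarith
  have hm0 : (0:ℝ) < m := by exact_mod_cast hm1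
  have hm3 : 3/(m:ℝ) < δ := by
    rw [div_lt_iff₀ hm0]
    rw [div_lt_iff₀ hδ] at hmgt
    linarith [hmgt]
  -- the cell with index k
  let cell : (Fin n → Fin m) → Set (Fin n → ℝ) := fun k =>
    {x | ∀ i, ((k i : ℕ) : ℝ) ≤ (m:ℝ) * x i ∧ (m:ℝ) * x i ≤ ((k i : ℕ) : ℝ) + 1}
  let S : Finset (Fin n → Fin m) := Finset.univ.filter (fun k => (K1 ∩ cell k).Nonempty)
  let L : List ((Fin n → ℝ) → ℝ) := S.toList.map (fun k => chi m (fun i => (k i : ℕ)))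
  refine ⟨fmax L, mc_fmax _ (fun f hf => ?_), fun x hx => ?_, fun y hy => ?_⟩
  · obtain ⟨k, -, rfl⟩ := List.mem_map.mp hf
    exact chi_mc m _
  · -- fmax L = 1 on K1
    have hxc := hK1 hx
    have hx0 : ∀ i, 0 ≤ x i := fun i => hxc.1 i
    have hx1 : ∀ i, x i ≤ 1 := fun i => hxc.2 i
    -- choose the cell containing x
    have hkex : ∀ i, ∃ ki : Fin m, ((ki : ℕ) : ℝ) ≤ (m:ℝ) * x i ∧ (m:ℝ) * x i ≤ ((ki : ℕ) : ℝ) + 1 := by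
      intro i
      by_cases hc : ⌊(m:ℝ) * x i⌋₊ ≤ m - 1
      · refine ⟨⟨⌊(m:ℝ) * x i⌋₊, by omega⟩, ?_, ?_⟩
        · exact Nat.floor_le (mul_nonneg (le_of_lt hm0) (hx0 i))
        · exact le_of_lt (Nat.lt_floor_add_one _)
      · push_neg at hc
        have hge : m ≤ ⌊(m:ℝ) * x i⌋₊ := by omega
        have hge' : (m:ℝ) ≤ (m:ℝ) * x i := by
          have := Nat.le_floor_iff (mul_nonneg (le_of_lt hm0) (hx0 i)) |>.mp hge
          exact_mod_cast this
        refine ⟨⟨m - 1, by omega⟩, ?_, ?_⟩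
        · simp only []
          rw [Nat.cast_sub hm1]
          push_cast
          linarith
        · simp only []
          rw [Nat.cast_sub hm1]
          push_cast
          have : (m:ℝ) * x i ≤ m := by
            calc (m:ℝ) * x i ≤ (m:ℝ) * 1 := by
                  exact mul_le_mul_of_nonneg_left (hx1 i) (le_of_lt hm0)
            _ = m := by ring
          linarith
    choose k hk using hkex
    have hkS : k ∈ S := by
      refine Finset.mem_filter.mpr ⟨Finset.mem_univ _, ⟨x, hx, fun i => hk i⟩⟩
    have hmem : chi m (fun i => (k i : ℕ)) ∈ L :=
      List.mem_map.mpr ⟨k, Finset.mem_toList.mpr hkS, rfl⟩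
    have h1' : chi m (fun i => (k i : ℕ)) x = 1 := chi_eq_one (fun i => hk i)
    refine le_antisymm (fmax_le (fun f hf => ?_) zero_le_one) ?_
    · obtain ⟨k', -, rfl⟩ := List.mem_map.mp hf
      exact chi_le_one m _ x
    · rw [← h1']
      exact le_fmax hmem x
  · -- fmax L = 0 on K2
    refine le_antisymm (fmax_le (fun f hf => ?_) le_rfl) (fmax_nonneg L y)
    obtain ⟨kk, hkk, rfl⟩ := List.mem_map.mp hf
    by_contra hcon
    push_neg at hcon
    have hpos : 0 < chi m (fun i => (kk i : ℕ)) y := hcon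
    have hkkS : kk ∈ S := Finset.mem_toList.mp hkk
    obtain ⟨z, hz1, hz2⟩ : (K1 ∩ cell kk).Nonempty := (Finset.mem_filter.mp hkkS).2
    -- dist y z small
    have hdist : dist y z ≤ 2/(m:ℝ) := by
      rw [dist_pi_le_iff (by positivity)]
      intro i
      have hb1 := chi_pos_imp hpos i
      have hb2 := hz2 i
      rw [Real.dist_eq, abs_le]
      constructor
      · rw [← neg_div, div_le_iff₀ hm0]
        nlinarith [hb1.1, hb2.2]
      · rw [le_div_iff₀ hm0]
        nlinarith [hb1.2, hb2.1]
    have h23 : 2/(m:ℝ) ≤ 3/(m:ℝ) := by gcongr <;> norm_num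
    have : y ∈ Metric.thickening δ K1 := by
      rw [Metric.mem_thickening_iff]
      exact ⟨z, hz1, lt_of_le_of_lt hdist (lt_of_le_of_lt h23 hm3)⟩
    exact (hthick this) hy

noncomputable section
open scoped NNReal ENNReal

variable (n) in
def comp (s : ((Fin n → ℝ) → ℝ) → ℝ) (K : Set (Fin n → ℝ)) : Set ((Fin n → ℝ) → ℝ) :=
  {f | IsMcNaughton n f ∧ ∀ x ∈ K, 1 ≤ f x}

variable (n) in
def lamR (s : ((Fin n → ℝ) → ℝ) → ℝ) (K : Set (Fin n → ℝ)) : ℝ := sInf (s '' comp n s K)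

variable {s : ((Fin n → ℝ) → ℝ) → ℝ}

lemma comp_nonempty (K : Set (Fin n → ℝ)) : (s '' comp n s K).Nonempty :=
  ⟨s (fun _ => 1), (fun _ => (1:ℝ)), ⟨mc_one, fun x _ => le_refl 1⟩, rfl⟩

variable (hs : IsState n s)
include hs

lemma comp_bdd (K : Set (Fin n → ℝ)) : BddBelow (s '' comp n s K) := by
  refine ⟨0, ?_⟩
  rintro r ⟨f, hf, rfl⟩
  exact s_nonneg hs hf.1

lemma lamR_nonneg (K : Set (Fin n → ℝ)) : 0 ≤ lamR n s K := by
  refine le_csInf (comp_nonempty K) ?_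
  rintro r ⟨f, hf, rfl⟩
  exact s_nonneg hs hf.1

lemma lamR_le {K : Set (Fin n → ℝ)} {f} (hf : IsMcNaughton n f) (h : ∀ x ∈ K, 1 ≤ f x) :
    lamR n s K ≤ s f :=
  csInf_le (comp_bdd hs K) ⟨f, ⟨hf, h⟩, rfl⟩

lemma le_lamR {K : Set (Fin n → ℝ)} {c : ℝ}
    (h : ∀ f, IsMcNaughton n f → (∀ x ∈ K, 1 ≤ f x) → c ≤ s f) : c ≤ lamR n s K := by
  refine le_csInf (comp_nonempty K) ?_
  rintro r ⟨f, hf, rfl⟩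
  exact h f hf.1 hf.2

omit hs in
lemma lamR_approx {K : Set (Fin n → ℝ)} {ε : ℝ} (hε : 0 < ε) :
    ∃ f, IsMcNaughton n f ∧ (∀ x ∈ K, 1 ≤ f x) ∧ s f < lamR n s K + ε := by
  obtain ⟨r, ⟨f, hf, rfl⟩, hlt⟩ := Real.lt_sInf_add_pos (comp_nonempty K) hε
  exact ⟨f, hf.1, hf.2, hlt⟩

lemma lamR_mono {K K' : Set (Fin n → ℝ)} (h : K ⊆ K') : lamR n s K ≤ lamR n s K' := by
  refine le_csInf (comp_nonempty K') ?_
  rintro r ⟨f, hf, rfl⟩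
  exact lamR_le hs hf.1 (fun x hx => hf.2 x (h hx))

lemma lamR_le_one (K : Set (Fin n → ℝ)) : lamR n s K ≤ 1 := by
  have := lamR_le hs (K := K) mc_one (fun x _ => le_refl 1)
  rwa [s_one hs] at this

lemma lamR_cube : lamR n s (cube n) = 1 := by
  refine le_antisymm (lamR_le_one hs _) (le_lamR hs (fun f hf h1 => ?_))
  have : s f = s (fun _ => 1) := s_congr hs hf mc_one
    (fun x hx => le_antisymm (mc_bdd hf x hx).2 (h1 x hx))
  rw [this, s_one hs]

lemma lamR_union_le {K1 K2 : Set (Fin n → ℝ)} (h1 : K1 ⊆ cube n) (h2 : K2 ⊆ cube n) :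
    lamR n s (K1 ∪ K2) ≤ lamR n s K1 + lamR n s K2 := by
  refine le_of_forall_pos_le_add (fun ε hε => ?_)
  obtain ⟨f1, hf1, hK1, hs1⟩ := lamR_approx (s := s) (K := K1) (half_pos hε)
  obtain ⟨f2, hf2, hK2, hs2⟩ := lamR_approx (s := s) (K := K2) (half_pos hε)
  have hopM := mc_oplus hf1 hf2
  have hcomp : ∀ x ∈ K1 ∪ K2, 1 ≤ min (f1 x + f2 x) 1 := by
    intro x hx
    rcases hx with hx | hx
    · have hg := hK1 x hx
      have h0 := (mc_bdd hf2 x (h1 hx)).1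
      exact le_min (by linarith) le_rfl
    · have hg := hK2 x hx
      have h0 := (mc_bdd hf1 x (h2 hx)).1
      exact le_min (by linarith) le_rfl
  have hle : s (fun x => min (f1 x + f2 x) 1) ≤ s f1 + s f2 := by
    have ht := two_term hs hf1 hf2
    have h0 := s_nonneg hs (mc_odot hf1 hf2)
    linarith
  have := lamR_le hs hopM hcomp
  linarith

lemma lamR_union_eq {K1 K2 : Set (Fin n → ℝ)} (hc1 : IsCompact K1) (hc2 : IsCompact K2)
    (h1 : K1 ⊆ cube n) (h2 : K2 ⊆ cube n) (hd : Disjoint K1 K2) :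
    lamR n s (K1 ∪ K2) = lamR n s K1 + lamR n s K2 := by
  refine le_antisymm (lamR_union_le hs h1 h2) ?_
  obtain ⟨h, hM, hOn1, hOn2⟩ := urysohn hc1 hc2 h1 h2 hd
  refine le_lamR hs (fun g hg hgK => ?_)
  have hg1M : IsMcNaughton n (fun x => min (g x) (h x)) := mc_min2 hg hM
  have hg2M : IsMcNaughton n (fun x => g x - min (g x) (h x)) := by
    refine mc_def ((mc_cont hg).sub (mc_cont hg1M)) (fun x hx => ?_)
      (pwa_sub (mc_pwa hg) (mc_pwa hg1M))
    have hb := mc_bdd hg x hx; have hb2 := mc_bdd hM x hx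
    constructor
    · have := min_le_left (g x) (h x); linarith
    · have : 0 ≤ min (g x) (h x) := le_min hb.1 hb2.1; linarith [hb.2]
  have hadd : s g = s (fun x => min (g x) (h x)) + s (fun x => g x - min (g x) (h x)) := by
    have e := s_add hs hg1M hg2M (fun x hx => by
      have hb := mc_bdd hg x hx
      have : min (g x) (h x) + (g x - min (g x) (h x)) = g x := by ring
      rw [this]; exact hb.2)
    rw [show (fun x => min (g x) (h x) + (g x - min (g x) (h x))) = g from
      funext fun x => by ring] at e
    exact e
  have hle1 : lamR n s K1 ≤ s (fun x => min (g x) (h x)) := by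
    refine lamR_le hs hg1M (fun x hx => ?_)
    have hgx := hgK x (mem_union_left _ hx)
    have hgb := mc_bdd hg x (h1 hx)
    have hg1 : g x = 1 := le_antisymm hgb.2 hgx
    rw [hg1, hOn1 x hx]
    norm_num
  have hle2 : lamR n s K2 ≤ s (fun x => g x - min (g x) (h x)) := by
    refine lamR_le hs hg2M (fun x hx => ?_)
    have hgb := mc_bdd hg x (h2 hx)
    have hm0 : min (g x) (h x) = 0 := by rw [hOn2 x hx]; exact min_eq_right hgb.1
    rw [hm0]
    simpa using hgK x (mem_union_right _ hx)
  linarith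

instance cubeCompact : CompactSpace ↥(cube n) := isCompact_iff_compactSpace.mp isCompact_Icc

omit hs

/-- the Riesz-type content associated with the state `s` -/
def mcContent (hs : IsState n s) : Content ↥(cube n) where
  toFun K := Real.toNNReal (lamR n s (Subtype.val '' (K : Set ↥(cube n))))
  mono' K1 K2 h := Real.toNNReal_mono (lamR_mono hs (Set.image_mono h))
  sup_disjoint' K1 K2 hd _ _ := by
    beta_reduce
    have e : lamR n s (Subtype.val '' (K1 : Set ↥(cube n)) ∪ Subtype.val '' (K2 : Set ↥(cube n)))
        = lamR n s (Subtype.val '' (K1 : Set ↥(cube n)))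
          + lamR n s (Subtype.val '' (K2 : Set ↥(cube n))) :=
      lamR_union_eq hs (K1.2.image continuous_subtype_val) (K2.2.image continuous_subtype_val)
        (Subtype.coe_image_subset _ _) (Subtype.coe_image_subset _ _)
        ((Set.disjoint_image_iff Subtype.val_injective).mpr hd)
    rw [TopologicalSpace.Compacts.coe_sup, Set.image_union, e]
    exact Real.toNNReal_add (lamR_nonneg hs _) (lamR_nonneg hs _)
  sup_le' K1 K2 := by
    beta_reduce
    rw [TopologicalSpace.Compacts.coe_sup, Set.image_union]
    refine le_trans (Real.toNNReal_mono
      (lamR_union_le hs (Subtype.coe_image_subset _ _) (Subtype.coe_image_subset _ _)))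
      Real.toNNReal_add_le

set_option maxHeartbeats 1000000 in
/-- the measure associated with the state `s` -/
def mcMeasure (hs : IsState n s) : Measure ↥(cube n) := (mcContent hs).measure

lemma mcContent_apply (hs : IsState n s) (K : TopologicalSpace.Compacts ↥(cube n)) :
    mcContent hs K = (Real.toNNReal (lamR n s (Subtype.val '' (K : Set ↥(cube n)))) : ℝ≥0∞) :=
  rfl

set_option maxHeartbeats 1000000 in
lemma mcMeasure_univ (hs : IsState n s) : mcMeasure hs Set.univ = 1 := by
  have h1 : mcMeasure hs Set.univ = (mcContent hs).outerMeasure Set.univ :=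
    Content.measure_apply _ MeasurableSet.univ
  have h2 : (mcContent hs).outerMeasure Set.univ
      = (mcContent hs).innerContent ⟨Set.univ, isOpen_univ⟩ :=
    Content.outerMeasure_of_isOpen _ _ isOpen_univ
  have h3 : (mcContent hs).innerContent ⟨Set.univ, isOpen_univ⟩
      = mcContent hs ⟨Set.univ, isCompact_univ⟩ :=
    Content.innerContent_of_isCompact _ isCompact_univ isOpen_univ
  rw [h1, h2, h3, mcContent_apply]
  rw [TopologicalSpace.Compacts.coe_mk, Subtype.coe_image_univ]
  rw [lamR_cube hs]
  norm_num

instance mcMeasure_prob (hs : IsState n s) : IsProbabilityMeasure (mcMeasure hs) :=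
  ⟨mcMeasure_univ hs⟩

section Integral
variable {s : ((Fin n → ℝ) → ℝ) → ℝ}

lemma clamp_pos_arg {y : ℝ} (h : 0 < clamp y) : 0 < y := by
  by_contra hc
  push_neg at hc
  rw [clamp_of_le y hc] at h
  exact lt_irrefl _ h

lemma clamp_sum : ∀ (K : ℕ) (y : ℝ), 0 ≤ y → y ≤ K →
    ∑ j ∈ Finset.range K, clamp (y - (j:ℝ)) = y := by
  intro K
  induction K with
  | zero => intro y h0 hK; simpa using (le_antisymm (by simpa using hK) h0).symm
  | succ K ih =>
      intro y h0 hK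
      rw [Finset.sum_range_succ]
      rcases le_total y (K:ℝ) with h | h
      · rw [ih y h0 h, clamp_of_le _ (by linarith), add_zero]
      · have hterm : ∀ j ∈ Finset.range K, clamp (y - (j:ℝ)) = 1 := by
          intro j hj
          have : (j:ℝ) + 1 ≤ (K:ℝ) := by exact_mod_cast Finset.mem_range.mp hj
          exact clamp_of_ge _ (by linarith)
        rw [Finset.sum_congr rfl hterm, Finset.sum_const, Finset.card_range, nsmul_eq_mul,
          mul_one, clamp_of_mem _ (by linarith) (by push_cast at hK ⊢; linarith)]
        ring

lemma mc_cont_restrict {f} (hf : IsMcNaughton n f) : Continuous (fun x : ↥(cube n) => f ↑x) :=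
  (mc_cont hf).restrict

lemma mc_integrable {f} (hf : IsMcNaughton n f) (ν : Measure ↥(cube n)) [IsFiniteMeasure ν] :
    Integrable (fun x : ↥(cube n) => f ↑x) ν := by
  refine ⟨(mc_cont_restrict hf).aestronglyMeasurable, ?_⟩
  refine MeasureTheory.HasFiniteIntegral.of_bounded (C := 1) ?_
  refine Filter.Eventually.of_forall (fun x => ?_)
  have h := mc_bdd hf ↑x x.2
  rw [Real.norm_eq_abs, abs_le]
  exact ⟨by linarith [h.1], h.2⟩

lemma lamR_le_measure (hs : IsState n s) {K : Set ↥(cube n)} (hK : IsCompact K) :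
    ENNReal.ofReal (lamR n s (Subtype.val '' K)) ≤ mcMeasure hs K := by
  have h1 := Content.le_outerMeasure_compacts (mcContent hs) ⟨K, hK⟩
  rw [mcMeasure, Content.measure_apply _ hK.isClosed.measurableSet]
  exact h1

lemma measure_open_le (hs : IsState n s) {O : Set ↥(cube n)} (hO : IsOpen O) {g}
    (hg : IsMcNaughton n g) (h1 : ∀ x : ↥(cube n), x ∈ O → 1 ≤ g ↑x) :
    mcMeasure hs O ≤ ENNReal.ofReal (s g) := by
  rw [mcMeasure, Content.measure_apply _ hO.measurableSet,
    Content.outerMeasure_of_isOpen _ _ hO]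
  refine iSup₂_le (fun K hKO => ?_)
  have hle : lamR n s (Subtype.val '' (K : Set ↥(cube n))) ≤ s g := by
    refine lamR_le hs hg ?_
    rintro x ⟨x', hx', rfl⟩
    exact h1 x' (hKO hx')
  exact ENNReal.ofReal_le_ofReal hle

lemma measure_open_le_s (hs : IsState n s) {O : Set ↥(cube n)} (hO : IsOpen O) {g}
    (hg : IsMcNaughton n g) (h1 : ∀ x : ↥(cube n), x ∈ O → 1 ≤ g ↑x) :
    (mcMeasure hs O).toReal ≤ s g := by
  have := measure_open_le hs hO hg h1
  have h2 := ENNReal.toReal_mono ENNReal.ofReal_ne_top this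
  rwa [ENNReal.toReal_ofReal (s_nonneg hs hg)] at h2

lemma s_le_measure (hs : IsState n s) {g} (hg : IsMcNaughton n g) {O : Set ↥(cube n)}
    (hOm : MeasurableSet O) (hsupp : ∀ x : ↥(cube n), 0 < g ↑x → x ∈ O) :
    s g ≤ (mcMeasure hs O).toReal := by
  refine le_of_forall_pos_le_add (fun ε hε => ?_)
  obtain ⟨r, hr⟩ := exists_nat_one_div_lt hε
  have hr1 : (0:ℝ) < (r:ℝ) + 1 := by positivity
  set K : Set ↥(cube n) := {x | 1/((r:ℝ)+1) ≤ g ↑x} with hKdef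
  have hKc : IsCompact K :=
    (isClosed_le continuous_const (mc_cont_restrict hg)).isCompact
  have hKO : K ⊆ O := fun x hx => hsupp x (lt_of_lt_of_le (by positivity) hx)
  have hcomp : s g - 1/((r:ℝ)+1) ≤ lamR n s (Subtype.val '' K) := by
    refine le_lamR hs (fun h hM hK1 => ?_)
    have hle : s g ≤ s h + 1/((r+1:ℕ):ℝ) := by
      refine s_le_add_inv hs hg hM (by omega) (fun x hx => ?_)
      push_cast
      have hpos : (0:ℝ) < 1/((r:ℝ)+1) := by positivity
      rcases le_total (1/((r:ℝ)+1)) (g x) with hc | hc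
      · have hxK : (⟨x, hx⟩ : ↥(cube n)) ∈ K := hc
        have := hK1 x ⟨⟨x, hx⟩, hxK, rfl⟩
        have hb := (mc_bdd hg x hx).2
        linarith
      · have hb := (mc_bdd hM x hx).1
        linarith
    push_cast at hle
    linarith
  have hlam : lamR n s (Subtype.val '' K) ≤ (mcMeasure hs O).toReal := by
    have h1 := le_trans (lamR_le_measure hs hKc) (measure_mono hKO)
    have hfin : mcMeasure hs O ≠ ∞ := measure_ne_top _ _
    have := ENNReal.toReal_mono hfin h1
    rwa [ENNReal.toReal_ofReal (lamR_nonneg hs _)] at this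
  linarith

theorem mcMeasure_integral (hs : IsState n s) {f} (hf : IsMcNaughton n f) :
    s f = ∫ x, f ↑x ∂(mcMeasure hs) := by
  set μ := mcMeasure hs with hμdef
  have key : ∀ m : ℕ, 1 ≤ m → |s f - ∫ x, f ↑x ∂μ| ≤ 1/(m:ℝ) := by
    intro m hm
    have hm0 : (0:ℝ) < m := by exact_mod_cast hm
    set A : ℕ → Set ↥(cube n) := fun j => {x | (j:ℝ)/(m:ℝ) < f ↑x} with hAdef
    have hAopen : ∀ j, IsOpen (A j) := fun j =>
      isOpen_lt continuous_const (mc_cont_restrict hf)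
    have hAmeas : ∀ j, MeasurableSet (A j) := fun j => (hAopen j).measurableSet
    set mr : ℕ → ℝ := fun j => (μ (A j)).toReal with hmrdef
    have hmr_nonneg : ∀ j, 0 ≤ mr j := fun j => ENNReal.toReal_nonneg
    have hmr_le_one : ∀ j, mr j ≤ 1 := fun j => by
      have := prob_le_one (μ := μ) (s := A j)
      have h2 := ENNReal.toReal_mono (by norm_num) this
      simpa using h2
    set g : ℕ → (Fin n → ℝ) → ℝ := fun j => fun x => clamp ((m:ℝ) * f x - (j:ℝ)) with hgdef
    have hgM : ∀ j, IsMcNaughton n (g j) := fun j => mc_clamp_layer hf m j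
    -- (a) lower bound for s (g j)
    have ha : ∀ j, mr (j+1) ≤ s (g j) := by
      intro j
      have h1 : ∀ x : ↥(cube n), x ∈ A (j+1) → 1 ≤ g j ↑x := by
        intro x hx
        have hx' : ((j:ℝ)+1)/(m:ℝ) < f ↑x := by
          have : (((j+1):ℕ):ℝ)/(m:ℝ) < f ↑x := hx
          push_cast at this
          exact this
        have : 1 ≤ (m:ℝ) * f ↑x - (j:ℝ) := by
          rw [div_lt_iff₀ hm0] at hx'
          linarith
        rw [hgdef]
        beta_reduce
        rw [clamp_of_ge _ this]
      have := measure_open_le_s hs (hAopen (j+1)) (hgM j) h1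
      exact this
    -- (b) upper bound for s (g j)
    have hb : ∀ j, s (g j) ≤ mr j := by
      intro j
      refine s_le_measure hs (hgM j) (hAmeas j) (fun x hx => ?_)
      have := clamp_pos_arg hx
      rw [hAdef]
      show (j:ℝ)/(m:ℝ) < f ↑x
      rw [div_lt_iff₀ hm0]
      linarith
    -- (c) integral bounds
    set I : ℕ → ℝ := fun j => ∫ x, g j ↑x ∂μ with hIdef
    have hind : ∀ j, Integrable ((A j).indicator (fun _ => (1:ℝ))) μ :=
      fun j => (integrable_const 1).indicator (hAmeas j)
    have hgint : ∀ j, Integrable (fun x : ↥(cube n) => g j ↑x) μ :=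
      fun j => mc_integrable (hgM j) μ
    have hc1 : ∀ j, mr (j+1) ≤ I j := by
      intro j
      have e1 : ∫ x, (A (j+1)).indicator (fun _ => (1:ℝ)) x ∂μ = mr (j+1) :=
        integral_indicator_one (hAmeas (j+1))
      rw [← e1]
      refine integral_mono (hind (j+1)) (hgint j) (fun x => ?_)
      by_cases hx : x ∈ A (j+1)
      · rw [Set.indicator_of_mem hx]
        have hx' : ((j:ℝ)+1)/(m:ℝ) < f ↑x := by
          have : (((j+1):ℕ):ℝ)/(m:ℝ) < f ↑x := hx
          push_cast at this
          exact this
        have : 1 ≤ (m:ℝ) * f ↑x - (j:ℝ) := by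
          rw [div_lt_iff₀ hm0] at hx'
          linarith
        rw [hgdef]
        beta_reduce
        rw [clamp_of_ge _ this]
      · rw [Set.indicator_of_notMem hx]
        exact clamp_nonneg _
    have hc2 : ∀ j, I j ≤ mr j := by
      intro j
      have e1 : ∫ x, (A j).indicator (fun _ => (1:ℝ)) x ∂μ = mr j :=
        integral_indicator_one (hAmeas j)
      rw [← e1]
      refine integral_mono (hgint j) (hind j) (fun x => ?_)
      by_cases hx : x ∈ A j
      · rw [Set.indicator_of_mem hx]
        exact clamp_le_one _
      · rw [Set.indicator_of_notMem hx]
        have hnot : ¬ ((j:ℝ)/(m:ℝ) < f ↑x) := hx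
        push_neg at hnot
        have : (m:ℝ) * f ↑x - (j:ℝ) ≤ 0 := by
          rw [le_div_iff₀ hm0] at hnot
          linarith
        rw [hgdef]
        beta_reduce
        rw [clamp_of_le _ this]
    -- (d) per-level bound
    have hd : ∀ j, |s (g j) - I j| ≤ mr j - mr (j+1) := by
      intro j
      rw [abs_le]
      constructor
      · linarith [ha j, hc2 j]
      · linarith [hb j, hc1 j]
    -- (e) sums
    have he1 : (m:ℝ) * s f = ∑ j ∈ Finset.range m, s (g j) := star' hs hf hm
    have he2 : (m:ℝ) * (∫ x, f ↑x ∂μ) = ∑ j ∈ Finset.range m, I j := by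
      rw [hIdef]
      rw [← integral_finset_sum _ (fun j _ => hgint j)]
      rw [← integral_const_mul]
      refine integral_congr_ae (Filter.Eventually.of_forall (fun x => ?_))
      have hbd := mc_bdd hf ↑x x.2
      have h0 : 0 ≤ (m:ℝ) * f ↑x := mul_nonneg (le_of_lt hm0) hbd.1
      have h1 : (m:ℝ) * f ↑x ≤ (m:ℝ) := by
        calc (m:ℝ) * f ↑x ≤ (m:ℝ) * 1 := mul_le_mul_of_nonneg_left hbd.2 (le_of_lt hm0)
          _ = m := by ring
      exact (clamp_sum m ((m:ℝ) * f ↑x) h0 h1).symm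
    -- (f) telescoping
    have hf1 : |(m:ℝ) * s f - (m:ℝ) * (∫ x, f ↑x ∂μ)| ≤ 1 := by
      rw [he1, he2, ← Finset.sum_sub_distrib]
      refine le_trans (Finset.abs_sum_le_sum_abs _ _) ?_
      refine le_trans (Finset.sum_le_sum (fun j _ => hd j)) ?_
      rw [Finset.sum_range_sub' mr m]
      linarith [hmr_le_one 0, hmr_nonneg m]
    -- (g) conclude
    rw [← mul_sub, abs_mul, abs_of_pos hm0] at hf1
    rw [le_div_iff₀ hm0, mul_comm]
    exact hf1
  by_contra hne
  have hpos : 0 < |s f - ∫ x, f ↑x ∂μ| := abs_pos.mpr (sub_ne_zero.mpr hne)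
  obtain ⟨r, hr⟩ := exists_nat_one_div_lt hpos
  have := key (r+1) (by omega)
  push_cast at this hr
  linarith

end Integral

section Final
variable {s : ((Fin n → ℝ) → ℝ) → ℝ}

instance mcMeasure_regular (hs : IsState n s) : (mcMeasure hs).Regular :=
  inferInstanceAs ((mcContent hs).measure.Regular)

lemma mcMeasure_pos (hs : IsState n s) (hF : Faithful n s) {O : Set ↥(cube n)}
    (hO : IsOpen O) (hne : O.Nonempty) : 0 < mcMeasure hs O := by
  obtain ⟨x₀, hx₀⟩ := hne
  obtain ⟨V, hVopen, hVeq⟩ := isOpen_induced_iff.mp hO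
  have hx₀V : (x₀ : Fin n → ℝ) ∈ V := by rw [← hVeq] at hx₀; exact hx₀
  obtain ⟨ε, hε, hball⟩ := Metric.isOpen_iff.mp hVopen _ hx₀V
  have hsing : IsCompact ({(x₀ : Fin n → ℝ)} : Set (Fin n → ℝ)) := isCompact_singleton
  have hK2c : IsCompact (cube n \ Metric.ball ↑x₀ (ε/2)) :=
    isCompact_Icc.diff Metric.isOpen_ball
  have hdisj : Disjoint ({(x₀ : Fin n → ℝ)} : Set (Fin n → ℝ)) (cube n \ Metric.ball ↑x₀ (ε/2)) := by
    rw [Set.disjoint_singleton_left]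
    exact fun hmem => hmem.2 (Metric.mem_ball_self (by linarith))
  obtain ⟨g, hgM, hg1, hg0⟩ := urysohn hsing hK2c (by simpa using x₀.2) diff_subset hdisj
  set K : Set ↥(cube n) := {x | (x : Fin n → ℝ) ∈ Metric.closedBall ↑x₀ (ε/2)} with hK
  have hKc : IsCompact K :=
    (Metric.isClosed_closedBall.preimage continuous_subtype_val).isCompact
  have hKO : K ⊆ O := by
    intro x hx
    have : (x : Fin n → ℝ) ∈ V := by
      refine hball ?_
      have hd : dist (x:Fin n → ℝ) ↑x₀ ≤ ε/2 := hx
      rw [Metric.mem_ball]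
      linarith
    rw [← hVeq]
    exact this
  have hgpos : 0 < s g := by
    have hne0 : s g ≠ 0 := hF g hgM ⟨↑x₀, x₀.2, by rw [hg1 ↑x₀ rfl]; norm_num⟩
    rcases (s_nonneg hs hgM).lt_or_eq with h | h
    · exact h
    · exact absurd h.symm hne0
  have hlam : s g ≤ lamR n s (Subtype.val '' K) := by
    refine le_lamR hs (fun h hM hK1 => ?_)
    refine s_mono hs hgM hM (fun x hx => ?_)
    by_cases hmem : x ∈ Metric.closedBall (↑x₀ : Fin n → ℝ) (ε/2)
    · have h1 := hK1 x ⟨⟨x, hx⟩, hmem, rfl⟩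
      have hgb := (mc_bdd hgM x hx).2
      linarith
    · have hx0 : g x = 0 :=
        hg0 x ⟨hx, fun hball' => hmem (Metric.ball_subset_closedBall hball')⟩
      rw [hx0]
      exact (mc_bdd hM x hx).1
  have h1 : ENNReal.ofReal (s g) ≤ mcMeasure hs O :=
    calc ENNReal.ofReal (s g) ≤ ENNReal.ofReal (lamR n s (Subtype.val '' K)) :=
          ENNReal.ofReal_le_ofReal hlam
    _ ≤ mcMeasure hs K := lamR_le_measure hs hKc
    _ ≤ mcMeasure hs O := measure_mono hKO
  exact lt_of_lt_of_le (ENNReal.ofReal_pos.mpr hgpos) h1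

lemma measure_le_on_compacts (hs : IsState n s) {μ ν : Measure ↥(cube n)}
    (hμp : IsProbabilityMeasure μ) (hνp : IsProbabilityMeasure ν) (hνr : ν.Regular)
    (hμi : ∀ f, IsMcNaughton n f → s f = ∫ x, f ↑x ∂μ)
    (hνi : ∀ f, IsMcNaughton n f → s f = ∫ x, f ↑x ∂ν)
    {K : Set ↥(cube n)} (hK : IsCompact K) : μ K ≤ ν K := by
  haveI := hμp; haveI := hνp; haveI := hνr
  rw [Set.measure_eq_iInf_isOpen K ν]
  refine le_iInf (fun U => le_iInf (fun hKU => le_iInf (fun hU => ?_)))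
  have hU' : IsCompact ((Subtype.val '' Uᶜ) : Set (Fin n → ℝ)) :=
    (hU.isClosed_compl.isCompact).image continuous_subtype_val
  have hdisj : Disjoint (Subtype.val '' K) (Subtype.val '' Uᶜ) :=
    (Set.disjoint_image_iff Subtype.val_injective).mpr
      (Set.disjoint_left.mpr (fun x hxK hxU => hxU (hKU hxK)))
  obtain ⟨h, hM, h1, h0⟩ := urysohn (hK.image continuous_subtype_val) hU'
    (Subtype.coe_image_subset _ _) (Subtype.coe_image_subset _ _) hdisj
  have hμK : (μ K).toReal ≤ s h := by
    rw [hμi h hM]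
    have e1 : ∫ x, K.indicator (fun _ => (1:ℝ)) x ∂μ = (μ K).toReal :=
      integral_indicator_one hK.isClosed.measurableSet
    rw [← e1]
    refine integral_mono ((integrable_const 1).indicator hK.isClosed.measurableSet)
      (mc_integrable hM μ) (fun x => ?_)
    by_cases hx : x ∈ K
    · rw [Set.indicator_of_mem hx, h1 ↑x ⟨x, hx, rfl⟩]
    · rw [Set.indicator_of_notMem hx]
      exact (mc_bdd hM ↑x x.2).1
  have hνU : s h ≤ (ν U).toReal := by
    rw [hνi h hM]
    have e1 : ∫ x, U.indicator (fun _ => (1:ℝ)) x ∂ν = (ν U).toReal :=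
      integral_indicator_one hU.measurableSet
    rw [← e1]
    refine integral_mono (mc_integrable hM ν)
      ((integrable_const 1).indicator hU.measurableSet) (fun x => ?_)
    by_cases hx : x ∈ U
    · rw [Set.indicator_of_mem hx]
      exact (mc_bdd hM ↑x x.2).2
    · rw [Set.indicator_of_notMem hx]
      exact le_of_eq (h0 ↑x ⟨x, hx, rfl⟩)
  exact (ENNReal.toReal_le_toReal (measure_ne_top μ K) (measure_ne_top ν U)).mp
    (le_trans hμK hνU)

lemma measure_unique (hs : IsState n s) {μ ν : Measure ↥(cube n)}
    (hμp : IsProbabilityMeasure μ) (hνp : IsProbabilityMeasure ν)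
    (hμr : μ.Regular) (hνr : ν.Regular)
    (hμi : ∀ f, IsMcNaughton n f → s f = ∫ x, f ↑x ∂μ)
    (hνi : ∀ f, IsMcNaughton n f → s f = ∫ x, f ↑x ∂ν) : μ = ν := by
  haveI := hμp; haveI := hνp; haveI := hμr; haveI := hνr
  have hcompeq : ∀ K : Set ↥(cube n), IsCompact K → μ K = ν K := fun K hK =>
    le_antisymm (measure_le_on_compacts hs hμp hνp hνr hμi hνi hK)
      (measure_le_on_compacts hs hνp hμp hμr hνi hμi hK)
  have hopen : ∀ U : Set ↥(cube n), IsOpen U → μ U = ν U := by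
    intro U hU
    rw [hU.measure_eq_iSup_isCompact μ, hU.measure_eq_iSup_isCompact ν]
    apply iSup_congr
    intro K
    apply iSup_congr
    intro hKU
    apply iSup_congr
    intro hKc
    exact hcompeq K hKc
  refine Measure.ext (fun A hA => ?_)
  rw [Set.measure_eq_iInf_isOpen A μ, Set.measure_eq_iInf_isOpen A ν]
  apply iInf_congr
  intro U
  apply iInf_congr
  intro hAU
  apply iInf_congr
  intro hUo
  exact hopen U hUo

end Final

section Main
variable {s : ((Fin n → ℝ) → ℝ) → ℝ}

lemma faithful_of_measure (hs : IsState n s) {μ : Measure ↥(cube n)}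
    (hp : IsProbabilityMeasure μ)
    (hpos : ∀ O : Set ↥(cube n), IsOpen O → O.Nonempty → 0 < μ O)
    (hint : ∀ f, IsMcNaughton n f → s f = ∫ x, f ↑x ∂μ) : Faithful n s := by
  haveI := hp
  intro f hf hex
  obtain ⟨x₀, hx₀c, hx₀⟩ := hex
  have hfx : 0 < f x₀ := lt_of_le_of_ne (mc_bdd hf x₀ hx₀c).1 (Ne.symm hx₀)
  set O : Set ↥(cube n) := {x | f x₀ / 2 < f ↑x} with hO
  have hOopen : IsOpen O := isOpen_lt continuous_const (mc_cont_restrict hf)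
  have hOne : O.Nonempty := ⟨⟨x₀, hx₀c⟩, by show f x₀/2 < f x₀; linarith⟩
  have hμO : 0 < μ O := hpos O hOopen hOne
  have htR : 0 < (μ O).toReal := ENNReal.toReal_pos (ne_of_gt hμO) (measure_ne_top _ _)
  have h1 : ∫ _x in O, (f x₀/2) ∂μ ≤ ∫ x in O, f ↑x ∂μ := by
    refine setIntegral_mono_on
      (integrableOn_const (measure_ne_top _ _))
      ((mc_integrable hf μ).integrableOn) hOopen.measurableSet (fun x hx => ?_)
    exact le_of_lt hx
  have h2 : ∫ x in O, f ↑x ∂μ ≤ ∫ x, f ↑x ∂μ :=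
    setIntegral_le_integral (mc_integrable hf μ)
      (Filter.Eventually.of_forall (fun x => (mc_bdd hf ↑x x.2).1))
  have h3 : ∫ _x in O, (f x₀/2) ∂μ = (μ O).toReal * (f x₀/2) := by
    rw [setIntegral_const, smul_eq_mul, measureReal_def]
  have h4 : 0 < s f := by
    rw [hint f hf]
    have : 0 < (μ O).toReal * (f x₀/2) := by positivity
    linarith
  exact ne_of_gt h4

end Main

end
end KP

theorem stmt7 (n : ℕ) (s : ((Fin n → ℝ) → ℝ) → ℝ) (hs : IsState n s) :
    Faithful n s ↔
      ∃! μ : Measure (cube n),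
        IsProbabilityMeasure μ ∧ μ.Regular ∧
        (∀ O : Set (cube n), IsOpen O → O.Nonempty → 0 < μ O) ∧
        (∀ f, IsMcNaughton n f → s f = ∫ x, f ↑x ∂μ) := by
  constructor
  · intro hF
    refine ⟨KP.mcMeasure hs, ⟨KP.mcMeasure_prob hs, KP.mcMeasure_regular hs,
      fun O hO hne => KP.mcMeasure_pos hs hF hO hne,
      fun f hf => KP.mcMeasure_integral hs hf⟩, ?_⟩
    rintro ν ⟨hνp, hνr, hνpos, hνi⟩
    exact KP.measure_unique hs hνp (KP.mcMeasure_prob hs) hνr (KP.mcMeasure_regular hs) hνi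
      (fun f hf => KP.mcMeasure_integral hs hf)
  · rintro ⟨μ, ⟨hp, hr, hpos, hint⟩, -⟩
    exact KP.faithful_of_measure hs hp hpos hint
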